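/- arXiv:1307.7803 — 6 statements merged into one kernel-verified Lean document; each statement's English description precedes it below -/
import Mathlib

section
/- Let f be a valid labeling for an MKL instance, let i be a label, and let e=(u,v) ∈ E_i(f) be an edge whose tail u is not reachable from the anchor a by a directed path in the subgraph induced by E_i(f). Then the labeling f' obtained from f by removing label i from e (i.e., f'(e)=f(e)∖{i} and f'(e')=f(e') for all e' ≠ e) is also valid, and its cost is at most the cost of f; moreover if α > 0 its cost is strictly smaller. -/
open Finset

/-- There is a directed path from `a` to `t` all of whose edges lie in `F`. -/
def ReachIn {V : Type*} (F : Set (V × V)) (a t : V) : Prop :=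
  Relation.ReflTransGen (fun u v => (u, v) ∈ F) a t

/-- `E_i(f)`: the set of edges of `E` carrying label `i` under the labeling `f`. -/
def EdgesWith {V : Type*} {k : ℕ} (E : Finset (V × V))
    (f : V × V → Finset (Fin k)) (i : Fin k) : Set (V × V) :=
  {e | e ∈ E ∧ i ∈ f e}

/-- `f` is a valid labeling: for every label `i` and every terminal `t ∈ T i`
there is a directed path from the anchor `a` to `t` all of whose edges lie in `E_i(f)`. -/
def ValidLabeling {V : Type*} {k : ℕ} (E : Finset (V × V)) (a : V)
    (T : Fin k → Finset V) (f : V × V → Finset (Fin k)) : Prop :=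
  ∀ i : Fin k, ∀ t ∈ T i, ReachIn (EdgesWith E f i) a t

/-- `L(f) = ∑_{e ∈ E} |f(e)|`. -/
def labelCount {V : Type*} {k : ℕ} (E : Finset (V × V))
    (f : V × V → Finset (Fin k)) : ℕ :=
  ∑ e ∈ E, (f e).card

/-- `N(f) = |{e ∈ E : f(e) ≠ ∅}|`. -/
def edgeCount {V : Type*} {k : ℕ} (E : Finset (V × V))
    (f : V × V → Finset (Fin k)) : ℕ :=
  (E.filter fun e => f e ≠ ∅).card

/-- The cost `α·L(f) + (1-α)·N(f)` of a labeling. -/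
def labelingCost {V : Type*} {k : ℕ} (α : ℝ) (E : Finset (V × V))
    (f : V × V → Finset (Fin k)) : ℝ :=
  α * labelCount E f + (1 - α) * edgeCount E f

lemma reach_of_reach_del {V : Type*} {F : Set (V × V)} {a : V} (e : V × V)
    (hu : ¬ ReachIn F a e.1) : ∀ {t : V}, ReachIn F a t → ReachIn (F \ {e}) a t := by
  intro t ht
  induction ht with
  | refl => exact Relation.ReflTransGen.refl
  | tail hab hbc ih =>
    refine ih.tail ⟨hbc, ?_⟩
    intro heq
    apply hu
    have : ReachIn F a _ := Relation.ReflTransGen.mono (p := fun u v => (u, v) ∈ F) (fun u v h => h.1) _ _ ih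
    rw [Set.mem_singleton_iff] at heq
    subst heq
    exact this


/-- Let `f` be a valid labeling, `i` a label, and `e = (u,v) ∈ E_i(f)`
an edge whose tail `u` is not reachable from the anchor `a` in the subgraph induced by
`E_i(f)`. Then the labeling `f'` obtained from `f` by removing label `i` from `e` is
also valid, its cost is at most the cost of `f`, and if `α > 0` its cost is strictly
smaller. -/
theorem mkl_remove_label_on_unreachable_edge {V : Type*} [Fintype V] [DecidableEq V]
    {k : ℕ} (E : Finset (V × V)) (a : V) (T : Fin k → Finset V) (hTa : ∀ i, a ∉ T i)
    (f : V × V → Finset (Fin k)) (hvalid : ValidLabeling E a T f)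
    (i : Fin k) (e : V × V) (he : e ∈ EdgesWith E f i)
    (hu : ¬ ReachIn (EdgesWith E f i) a e.1)
    (α : ℝ) (hα0 : 0 ≤ α) (hα1 : α ≤ 1) :
    ValidLabeling E a T (Function.update f e (f e \ {i})) ∧
    labelingCost α E (Function.update f e (f e \ {i})) ≤ labelingCost α E f ∧
    (0 < α → labelingCost α E (Function.update f e (f e \ {i})) < labelingCost α E f) := by
  set f' := Function.update f e (f e \ {i}) with hf'
  have hfe : ∀ e', e' ≠ e → f' e' = f e' := fun e' h => Function.update_of_ne h _ f
  have hfee : f' e = f e \ {i} := Function.update_self _ _ _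
  have hEi : EdgesWith E f' i = EdgesWith E f i \ {e} := by
    ext e'
    by_cases h : e' = e
    · subst h
      simp [EdgesWith, hfee]
    · simp [EdgesWith, hfe e' h, h, Finset.mem_sdiff]
  have hEj : ∀ j, j ≠ i → EdgesWith E f' j = EdgesWith E f j := by
    intro j hj
    ext e'
    by_cases h : e' = e
    · subst h
      simp [EdgesWith, hfee, Finset.mem_sdiff, hj]
    · simp [EdgesWith, hfe e' h]
  have hvalid' : ValidLabeling E a T f' := by
    intro j t ht
    by_cases hj : j = i
    · subst hj
      rw [hEi]
      exact reach_of_reach_del e hu (hvalid j t ht)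
    · rw [hEj j hj]
      exact hvalid j t ht
  have heE : e ∈ E := he.1
  have hie : i ∈ f e := he.2
  -- label count decreases by exactly 1
  have hLC : labelCount E f' + 1 = labelCount E f := by
    unfold labelCount
    rw [← Finset.add_sum_erase E _ heE, ← Finset.add_sum_erase E (fun e => (f e).card) heE]
    have h1 : (f' e).card + 1 = (f e).card := by
      rw [hfee, Finset.card_sdiff_of_subset (by simpa using hie)]
      simpa using Nat.succ_pred_eq_of_pos (Finset.card_pos.mpr ⟨i, hie⟩)
    have h2 : ∑ x ∈ E.erase e, (f' x).card = ∑ x ∈ E.erase e, (f x).card := by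
      apply Finset.sum_congr rfl
      intro x hx
      rw [hfe x (Finset.ne_of_mem_erase hx)]
    omega
  have hNC : edgeCount E f' ≤ edgeCount E f := by
    apply Finset.card_le_card
    intro x hx
    rw [Finset.mem_filter] at hx ⊢
    refine ⟨hx.1, ?_⟩
    by_cases h : x = e
    · subst h
      intro h0
      exact hx.2 (by rw [hfee, h0]; simp)
    · rw [← hfe x h]; exact hx.2
  have key : labelingCost α E f' ≤ labelingCost α E f - α := by
    unfold labelingCost
    have h1 : (labelCount E f' : ℝ) = labelCount E f - 1 := by
      have := hLC; push_cast [← this]; ring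
    have h2 : (edgeCount E f' : ℝ) ≤ edgeCount E f := by exact_mod_cast hNC
    nlinarith [h2]
  exact ⟨hvalid', by linarith, fun hpos => by linarith⟩
end

section
/- Let f be a valid labeling of minimum cost (for a fixed 0 < α ≤ 1) for an MKL instance, and fix a label i. Suppose every vertex incident to an edge of E_i(f) is reachable from the anchor a in the subgraph G_i induced by E_i(f), and that no edge of E_i(f) is directed into a. If the underlying undirected graph of G_i contained a cycle v_1,…,v_n, then choosing v_1 to be a cycle vertex of maximum directed distance from a in G_i, removing label i from one of the two cycle edges incident to v_1 (the one oriented into v_1 that is not needed to reach v_1) would yield a valid labeling of strictly smaller cost — contradicting minimality. Hence the underlying undirected graph of G_i is acyclic. -/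
open Finset

/-- The underlying undirected (simple) graph of a set of directed edges. -/
def undirGraph {V : Type*} (F : Set (V × V)) : SimpleGraph V where
  Adj u v := u ≠ v ∧ ((u, v) ∈ F ∨ (v, u) ∈ F)
  symm := ⟨fun u v h => ⟨h.1.symm, h.2.symm⟩⟩
  loopless := ⟨fun v h => h.1 rfl⟩

/-- The underlying undirected multigraph of a set of directed edges contains no cycle:
no self-loops, no pair of anti-parallel edges (an undirected 2-cycle), and the
underlying simple graph is acyclic. -/
def UndirectedAcyclic {V : Type*} (F : Set (V × V)) : Prop :=
  (∀ u, (u, u) ∉ F) ∧ (∀ u v, (u, v) ∈ F → (v, u) ∉ F) ∧ (undirGraph F).IsAcyclic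

/-- Auxiliary: chains of length `n` in an edge set. -/
def ReachN {V : Type*} (S : Set (V × V)) : ℕ → V → V → Prop
  | 0 => Eq
  | (n+1) => fun u v => ∃ w, ReachN S n u w ∧ (w, v) ∈ S

lemma reachIn_iff_reachN {V : Type*} {S : Set (V × V)} {a v : V} :
    ReachIn S a v ↔ ∃ n, ReachN S n a v := by
  constructor
  · intro h
    induction h with
    | refl => exact ⟨0, rfl⟩
    | tail _ hbc ih => obtain ⟨n, hn⟩ := ih; exact ⟨n+1, _, hn, hbc⟩
  · rintro ⟨n, hn⟩
    induction n generalizing v with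
    | zero => cases hn; exact .refl
    | succ n ih => obtain ⟨w, hw, hwv⟩ := hn; exact .tail (ih hw) hwv

lemma reachIn_mono {V : Type*} {S S' : Set (V × V)} (h : S ⊆ S') {a v : V} :
    ReachIn S a v → ReachIn S' a v := by
  intro hr
  induction hr with
  | refl => exact .refl
  | tail _ hbc ih => exact .tail ih (h hbc)

lemma reach_last {V : Type*} {S : Set (V × V)} {a v : V}
    (h : ReachIn S a v) (hva : v ≠ a) :
    ∃ w, ReachIn {e ∈ S | e.2 ≠ v} a w ∧ (w, v) ∈ S := by
  have main : ∀ t, ReachIn S a t →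
      ReachIn {e ∈ S | e.2 ≠ v} a t ∨
        ∃ w, ReachIn {e ∈ S | e.2 ≠ v} a w ∧ (w, v) ∈ S := by
    intro t ht
    induction ht with
    | refl => exact Or.inl .refl
    | @tail b c _ hbc ih =>
      rcases ih with ih | ih
      · by_cases hc : c = v
        · exact Or.inr ⟨b, ih, hc ▸ hbc⟩
        · exact Or.inl (.tail ih ⟨hbc, hc⟩)
      · exact Or.inr ih
  rcases main v h with h' | h'
  · rcases Relation.ReflTransGen.cases_tail h' with h'' | ⟨b, _, hb⟩
    · exact absurd h'' hva
    · exact absurd rfl hb.2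
  · exact h'

/-- Auxiliary: shortest-chain distance. -/
noncomputable def distT {V : Type*} (S : Set (V × V)) (a v : V) : ℕ :=
  sInf {n | ReachN S n a v}

/-- Auxiliary: the head of an undirected edge, i.e. the endpoint it is directed into. -/
noncomputable def fHead {V : Type*} (F : Set (V × V)) (e : V × V) : V :=
  letI := Classical.dec (e ∈ F)
  if e ∈ F then e.2 else e.1

/-- Auxiliary: if a rank function strictly increases along the directed edges of `F` and
every vertex has in-degree at most one, then the underlying undirected graph is acyclic. -/
lemma no_cycle_aux {V : Type*} [DecidableEq V] (F : Set (V × V)) (d : V → ℕ)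
    (hdlt : ∀ u v : V, (u, v) ∈ F → d u < d v)
    (hindeg : ∀ u u' v : V, (u, v) ∈ F → (u', v) ∈ F → u = u') :
    (undirGraph F).IsAcyclic := by
  classical
  intro v p hp
  rcases p with _ | ⟨hadj, q⟩
  · exact hp.ne_nil rfl
  · set p := SimpleGraph.Walk.cons hadj q with hpdef
    let hdt : (undirGraph F).Dart → V := fun dt => fHead F dt.toProd
    have hsrc : ∀ dt : (undirGraph F).Dart, ∃ x, (x, hdt dt) ∈ F ∧
        (x = dt.toProd.1 ∨ x = dt.toProd.2) ∧ Sym2.mk x (hdt dt) = dt.edge := by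
      intro dt
      by_cases h' : dt.toProd ∈ F
      · have heq : hdt dt = dt.toProd.2 := by
          simp only [hdt, fHead]; rw [if_pos h']
        refine ⟨dt.toProd.1, ?_, Or.inl rfl, ?_⟩
        · rw [heq]; exact h'
        · rw [heq]; rfl
      · have h2 : (dt.toProd.2, dt.toProd.1) ∈ F := by
          rcases dt.adj.2 with h | h
          · exact absurd h h'
          · exact h
        have heq : hdt dt = dt.toProd.1 := by
          simp only [hdt, fHead]; rw [if_neg h']
        refine ⟨dt.toProd.2, ?_, Or.inr rfl, ?_⟩
        · rw [heq]; exact h2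
        · rw [heq]
          exact Sym2.eq_swap
    have hedges' : (p.darts.map SimpleGraph.Dart.edge).Nodup := hp.edges_nodup
    have hdartsnd : p.darts.Nodup := hedges'.of_map
    have hinj : ∀ d1 ∈ p.darts, ∀ d2 ∈ p.darts, hdt d1 = hdt d2 → d1 = d2 := by
      intro d1 h1 d2 h2 heq
      obtain ⟨x1, hx1, _, he1⟩ := hsrc d1
      obtain ⟨x2, hx2, _, he2⟩ := hsrc d2
      rw [heq] at hx1 he1
      have hx : x1 = x2 := hindeg x1 x2 _ hx1 hx2
      subst hx
      have : d1.edge = d2.edge := by rw [← he1, ← he2]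
      exact List.inj_on_of_nodup_map hedges' h1 h2 this
    have hmapnd : (p.darts.map hdt).Nodup := List.Nodup.map_on hinj hdartsnd
    have hsupp : ∀ x ∈ p.support, x ∈ q.support := by
      intro x hx
      rw [hpdef, SimpleGraph.Walk.support_cons] at hx
      rcases List.mem_cons.1 hx with rfl | hx
      · exact q.end_mem_support
      · exact hx
    have hsubset : (p.darts.map hdt).toFinset ⊆ q.support.toFinset := by
      intro x hx
      rw [List.mem_toFinset] at hx ⊢
      obtain ⟨dt, hdtm, rfl⟩ := List.mem_map.1 hx
      have : hdt dt = dt.toProd.1 ∨ hdt dt = dt.toProd.2 := by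
        by_cases h' : dt.toProd ∈ F
        · right; simp only [hdt, fHead]; rw [if_pos h']
        · left; simp only [hdt, fHead]; rw [if_neg h']
      rcases this with h | h
      · rw [h]; exact hsupp _ (p.dart_fst_mem_support_of_mem_darts hdtm)
      · rw [h]; exact hsupp _ (p.dart_snd_mem_support_of_mem_darts hdtm)
    have hsuppnd : q.support.Nodup := by
      have := hp.support_nodup
      rwa [hpdef, SimpleGraph.Walk.support_cons, List.tail_cons] at this
    have hcard1 : (p.darts.map hdt).toFinset.card = p.length := by
      rw [List.toFinset_card_of_nodup hmapnd, List.length_map, SimpleGraph.Walk.length_darts]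
    have hcard2 : q.support.toFinset.card = p.length := by
      rw [List.toFinset_card_of_nodup hsuppnd]
      have h1 := SimpleGraph.Walk.length_support q
      have h2 : p.length = q.length + 1 := by rw [hpdef, SimpleGraph.Walk.length_cons]
      omega
    have heqset : (p.darts.map hdt).toFinset = q.support.toFinset :=
      Finset.eq_of_subset_of_card_le hsubset (by omega)
    have hne : q.support.toFinset.Nonempty :=
      ⟨v, List.mem_toFinset.2 q.end_mem_support⟩
    obtain ⟨m, hmB, hmmin⟩ := Finset.exists_min_image q.support.toFinset d hne
    have hmA : m ∈ (p.darts.map hdt).toFinset := by rw [heqset]; exact hmB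
    rw [List.mem_toFinset] at hmA
    obtain ⟨dt, hdtm, hdteq⟩ := List.mem_map.1 hmA
    obtain ⟨x, hxm, hor, _⟩ := hsrc dt
    rw [hdteq] at hxm
    have hxsup : x ∈ q.support.toFinset := by
      rw [List.mem_toFinset]
      rcases hor with rfl | rfl
      · exact hsupp _ (p.dart_fst_mem_support_of_mem_darts hdtm)
      · exact hsupp _ (p.dart_snd_mem_support_of_mem_darts hdtm)
    have h1 := hdlt x m hxm
    have h2 := hmmin x hxsup
    omega

/-- Let `f` be a valid labeling of minimum cost (for a fixed
`0 < α ≤ 1`) and fix a label `i`. If every vertex incident to an edge of `E_i(f)` is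
reachable from the anchor `a` in the subgraph `G_i` induced by `E_i(f)`, and no edge of
`E_i(f)` is directed into `a`, then the underlying undirected graph of `G_i` is acyclic
(otherwise, removing label `i` from a suitable cycle edge oriented into a cycle vertex
of maximum distance from `a` would give a valid labeling of strictly smaller cost,
contradicting minimality). -/
theorem mkl_min_cost_label_subgraph_acyclic {V : Type*} [Fintype V] [DecidableEq V]
    {k : ℕ} (E : Finset (V × V)) (a : V) (T : Fin k → Finset V) (hTa : ∀ i, a ∉ T i)
    (f : V × V → Finset (Fin k)) (α : ℝ) (hα0 : 0 < α) (hα1 : α ≤ 1)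
    (hvalid : ValidLabeling E a T f)
    (hmin : ∀ g : V × V → Finset (Fin k),
      ValidLabeling E a T g → labelingCost α E f ≤ labelingCost α E g)
    (i : Fin k)
    (hreach : ∀ e ∈ EdgesWith E f i,
      ReachIn (EdgesWith E f i) a e.1 ∧ ReachIn (EdgesWith E f i) a e.2)
    (hnoina : ∀ u : V, (u, a) ∉ EdgesWith E f i) :
    UndirectedAcyclic (EdgesWith E f i) := by
  classical
  set F : Set (V × V) := EdgesWith E f i with hF
  -- KEY: no single edge of F is removable while preserving reachability
  have key : ∀ e0 ∈ F, ¬ (∀ t, ReachIn F a t → ReachIn {x ∈ F | x ≠ e0} a t) := by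
    intro e0 he0 hpres
    set g : V × V → Finset (Fin k) := fun x => if x = e0 then (f x).erase i else f x with hg
    have hge0 : g e0 = (f e0).erase i := by simp [hg]
    have hgne : ∀ x, x ≠ e0 → g x = f x := by intro x hx; simp [hg, hx]
    have hEdgesi : EdgesWith E g i = {x ∈ F | x ≠ e0} := by
      ext x
      by_cases hx : x = e0
      · subst hx; simp [EdgesWith, hge0, hF]
      · simp [EdgesWith, hgne x hx, hF, hx]
    have hgvalid : ValidLabeling E a T g := by
      intro j t ht
      by_cases hji : j = i
      · rw [hji, hEdgesi]; exact hpres t (hvalid i t (hji ▸ ht))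
      · have hEj : EdgesWith E g j = EdgesWith E f j := by
          ext x
          by_cases hx : x = e0
          · subst hx; simp [EdgesWith, hge0, Finset.mem_erase, hji]
          · simp [EdgesWith, hgne x hx]
        rw [hEj]; exact hvalid j t ht
    have he0E : e0 ∈ E := he0.1
    have hie0 : i ∈ f e0 := he0.2
    have hL : labelCount E g + 1 = labelCount E f := by
      unfold labelCount
      rw [← Finset.sum_erase_add E _ he0E, ← Finset.sum_erase_add E (fun e => (f e).card) he0E]
      have h1 : ∑ x ∈ E.erase e0, (g x).card = ∑ x ∈ E.erase e0, (f x).card := by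
        apply Finset.sum_congr rfl
        intro x hx
        rw [hgne x (Finset.ne_of_mem_erase hx)]
      have h2 : (g e0).card + 1 = (f e0).card := by
        rw [hge0, Finset.card_erase_of_mem hie0]
        have : 0 < (f e0).card := Finset.card_pos.2 ⟨i, hie0⟩
        omega
      omega
    have hN : edgeCount E g ≤ edgeCount E f := by
      apply Finset.card_le_card
      intro x hx
      simp only [Finset.mem_filter] at hx ⊢
      refine ⟨hx.1, ?_⟩
      by_cases hxe : x = e0
      · subst hxe
        exact Finset.ne_empty_of_mem hie0
      · rw [hgne x hxe] at hx; exact hx.2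
    have hle := hmin g hgvalid
    have hLr : (labelCount E g : ℝ) = (labelCount E f : ℝ) - 1 := by
      have := hL; push_cast [← this]; ring
    have hNr : (edgeCount E g : ℝ) ≤ (edgeCount E f : ℝ) := by exact_mod_cast hN
    unfold labelingCost at hle
    rw [hLr] at hle
    nlinarith [hle, hNr, hα0, hα1]
  -- in-degree at most one
  have indeg : ∀ u u' v : V, (u, v) ∈ F → (u', v) ∈ F → u = u' := by
    intro u u' v huv hu'v
    by_contra hne
    have hva : v ≠ a := fun h => hnoina u (h ▸ huv)
    obtain ⟨w, hw, hwv⟩ := reach_last ((hreach _ huv).2) hva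
    have hex : ∃ x, (x, v) ∈ F ∧ x ≠ w := by
      by_cases h : u = w
      · exact ⟨u', hu'v, fun h' => hne (h.trans h'.symm)⟩
      · exact ⟨u, huv, h⟩
    obtain ⟨x, hxv, hxw⟩ := hex
    apply key (x, v) hxv
    intro t ht
    induction ht with
    | refl => exact .refl
    | @tail b c _ hbc ih =>
      by_cases hbc' : (b, c) = (x, v)
      · have hcv : c = v := congrArg Prod.snd hbc'
        rw [hcv]
        have hsub : {e ∈ F | e.2 ≠ v} ⊆ {e ∈ F | e ≠ (x, v)} := by
          intro e he
          exact ⟨he.1, fun h' => he.2 (congrArg Prod.snd h')⟩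
        have hwmem : ReachIn {e ∈ F | e ≠ (x, v)} a w := reachIn_mono hsub hw
        exact .tail hwmem ⟨hwv, fun h' => hxw ((congrArg Prod.fst h').symm)⟩
      · exact .tail ih ⟨hbc, hbc'⟩
  -- no self loops
  have noloop : ∀ u, (u, u) ∉ F := by
    intro u huu
    have hua : u ≠ a := fun h => hnoina u (h ▸ huu)
    obtain ⟨w, hw, hwu⟩ := reach_last ((hreach _ huu).2) hua
    have hwu' : w = u := indeg w u u hwu huu
    rw [hwu'] at hw
    rcases Relation.ReflTransGen.cases_tail hw with h | ⟨b, _, hb⟩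
    · exact hua h
    · exact hb.2 rfl
  -- no anti-parallel pairs
  have noanti : ∀ u v, (u, v) ∈ F → (v, u) ∉ F := by
    intro u v huv hvu
    have hua : u ≠ a := fun h => hnoina v (h ▸ hvu)
    have hva : v ≠ a := fun h => hnoina u (h ▸ huv)
    obtain ⟨w, hw, hwu⟩ := reach_last ((hreach _ huv).1) hua
    have hwv : w = v := indeg w v u hwu hvu
    rw [hwv] at hw
    obtain ⟨w', hw', hw'v⟩ := reach_last hw hva
    have hw'u : w' = u := indeg w' u v hw'v.1 huv
    rw [hw'u] at hw'
    rcases Relation.ReflTransGen.cases_tail hw' with h | ⟨b, _, hb⟩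
    · exact hua h
    · exact hb.1.2 rfl
  refine ⟨noloop, noanti, ?_⟩
  -- the distance strictly increases along F-edges
  have hd : ∀ u v : V, (u, v) ∈ F → distT F a u < distT F a v := by
    intro u v huv
    have hv : ∃ n, ReachN F n a v := reachIn_iff_reachN.1 ((hreach _ huv).2)
    have hva : v ≠ a := fun h => hnoina u (h ▸ huv)
    have hspec : ReachN F (sInf {n | ReachN F n a v}) a v := Nat.sInf_mem hv
    unfold distT
    cases hnv : sInf {n | ReachN F n a v} with
    | zero => rw [hnv] at hspec; exact absurd hspec.symm hva
    | succ m =>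
      rw [hnv] at hspec
      obtain ⟨w, hw, hwv⟩ := hspec
      have hwu : w = u := indeg w u v hwv huv
      rw [hwu] at hw
      have : sInf {n | ReachN F n a u} ≤ m := Nat.sInf_le hw
      omega
  exact no_cycle_aux F (distT F a) hd indeg
end

section
/- Let g be a multi-set labeling of the edges of G satisfying the MKL flow constraints: (i) the multiset union of g over the out-edges of the anchor a assigns each label i exactly multiplicity |T_i|, and (ii) for every vertex v ≠ a, the multiset union of g over In(v) equals the multiset union of g over Out(v) together with one extra copy of each label i with v ∈ T_i. Define f(e) to be the underlying set of labels of g(e). Then f is a valid labeling; moreover L(f) ≤ L(g) and N(f) = N(g), so the cost of f is at most the cost of g for every 0 ≤ α ≤ 1. -/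
open Finset

/-- The MKL flow constraints for a multi-set labeling with multiplicities
`x e i` of label `i` on edge `e`: (i) the total multiplicity of each label `i` on the
out-edges of the anchor `a` is `|T i|`, and (ii) for every vertex `v ≠ a` and label `i`,
the total multiplicity entering `v` equals the total multiplicity leaving `v`, plus `1`
if `v ∈ T i`. -/
def FlowConstraints {V : Type*} [DecidableEq V] {k : ℕ} (E : Finset (V × V)) (a : V)
    (T : Fin k → Finset V) (x : V × V → Fin k → ℕ) : Prop :=
  (∀ i : Fin k, ∑ e ∈ E.filter (fun e => e.1 = a), x e i = (T i).card) ∧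
  (∀ v : V, v ≠ a → ∀ i : Fin k,
    ∑ e ∈ E.filter (fun e => e.2 = v), x e i
      = ∑ e ∈ E.filter (fun e => e.1 = v), x e i + (if v ∈ T i then 1 else 0))

/-- `L(g) = ∑_{e ∈ E} ∑_i x_e^i` for a multi-set labeling `g` with multiplicities `x`. -/
def flowLabelCount {V : Type*} {k : ℕ} (E : Finset (V × V))
    (x : V × V → Fin k → ℕ) : ℕ :=
  ∑ e ∈ E, ∑ i : Fin k, x e i

/-- `N(g) = |{e ∈ E : g(e) nonempty}|` for a multi-set labeling `g` with
multiplicities `x`. -/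
def flowEdgeCount {V : Type*} {k : ℕ} (E : Finset (V × V))
    (x : V × V → Fin k → ℕ) : ℕ :=
  (E.filter fun e => ∃ i : Fin k, 0 < x e i).card

/-- Let `g` be a multi-set labeling (with multiplicities `x`)
satisfying the MKL flow constraints, and let `f(e)` be the underlying set of labels of
`g(e)`, i.e. the set of labels with positive multiplicity on `e`. Then `f` is a valid
labeling; moreover `L(f) ≤ L(g)` and `N(f) = N(g)`, so the cost of `f` is at most the
cost of `g` for every `0 ≤ α ≤ 1`. -/
theorem mkl_flow_to_labeling {V : Type*} [Fintype V] [DecidableEq V] {k : ℕ}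
    (E : Finset (V × V)) (a : V) (T : Fin k → Finset V) (hTa : ∀ i, a ∉ T i)
    (x : V × V → Fin k → ℕ) (hflow : FlowConstraints E a T x) :
    ValidLabeling E a T (fun e => Finset.univ.filter fun i => 0 < x e i) ∧
    labelCount E (fun e => Finset.univ.filter fun i => 0 < x e i)
      ≤ flowLabelCount E x ∧
    edgeCount E (fun e => Finset.univ.filter fun i => 0 < x e i)
      = flowEdgeCount E x ∧
    ∀ α : ℝ, 0 ≤ α → α ≤ 1 →
      labelingCost α E (fun e => Finset.univ.filter fun i => 0 < x e i)
        ≤ α * flowLabelCount E x + (1 - α) * flowEdgeCount E x := by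
  classical
  obtain ⟨hsrc, hcons⟩ := hflow
  set f : V × V → Finset (Fin k) := fun e => Finset.univ.filter fun i => 0 < x e i with hf
  have hvalid : ValidLabeling E a T f := by
    intro i t ht
    by_contra hreach
    set P : V → Prop := fun v => ReachIn (EdgesWith E f i) a v with hP
    have hPa : P a := Relation.ReflTransGen.refl
    have hstep : ∀ e ∈ E, 0 < x e i → P e.1 → P e.2 := by
      intro e he hx h1
      refine Relation.ReflTransGen.tail h1 ?_
      have : (e.1, e.2) = e := rfl
      show (e.1, e.2) ∈ EdgesWith E f i
      rw [this]
      exact ⟨he, by simp [hf, hx]⟩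
    set A : Finset V := Finset.univ.filter fun v => ¬ P v with hA
    have htA : t ∈ A := by simp [hA, hP, hreach]
    have hsum : ∑ v ∈ A, ∑ e ∈ E.filter (fun e => e.2 = v), x e i
        = ∑ v ∈ A, (∑ e ∈ E.filter (fun e => e.1 = v), x e i
            + (if v ∈ T i then 1 else 0)) := by
      refine Finset.sum_congr rfl fun v hv => ?_
      have hva : v ≠ a := by
        rintro rfl
        simp only [hA, Finset.mem_filter] at hv
        exact hv.2 hPa
      exact hcons v hva i
    rw [Finset.sum_fiberwise_eq_sum_filter E A (fun e => e.2) (fun e => x e i),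
      Finset.sum_add_distrib,
      Finset.sum_fiberwise_eq_sum_filter E A (fun e => e.1) (fun e => x e i)] at hsum
    have hin : ∑ e ∈ E.filter (fun e => e.2 ∈ A), x e i
        ≤ ∑ e ∈ E.filter (fun e => e.1 ∈ A), x e i := by
      have h1 : ∑ e ∈ E.filter (fun e => e.2 ∈ A), x e i
          = ∑ e ∈ E.filter (fun e => e.2 ∈ A ∧ e.1 ∈ A), x e i := by
        refine (Finset.sum_subset ?_ ?_).symm
        · intro e he
          simp only [Finset.mem_filter] at he ⊢
          exact ⟨he.1, he.2.1⟩
        · intro e he hne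
          simp only [Finset.mem_filter, not_and] at he hne
          have h1A : e.1 ∉ A := fun h => hne he.1 he.2 h
          have hPe1 : P e.1 := by
            by_contra h
            exact h1A (by simp [hA, h])
          by_contra hx0
          have hpos : 0 < x e i := Nat.pos_of_ne_zero hx0
          have := hstep e he.1 hpos hPe1
          have : e.2 ∉ A := by simp [hA, this]
          exact this he.2
      rw [h1]
      refine Finset.sum_le_sum_of_subset ?_
      intro e he
      simp only [Finset.mem_filter] at he ⊢
      exact ⟨he.1, he.2.2⟩
    have hpos : 1 ≤ ∑ v ∈ A, (if v ∈ T i then 1 else 0) := by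
      calc 1 = if t ∈ T i then 1 else 0 := by simp [ht]
        _ ≤ ∑ v ∈ A, (if v ∈ T i then 1 else 0) :=
          Finset.single_le_sum (f := fun v => if v ∈ T i then 1 else 0)
            (fun v _ => Nat.zero_le _) htA
    omega
  have hL : labelCount E f ≤ flowLabelCount E x := by
    refine Finset.sum_le_sum fun e _ => ?_
    calc (f e).card = ∑ i ∈ f e, 1 := by rw [Finset.card_eq_sum_ones]
      _ ≤ ∑ i ∈ f e, x e i :=
        Finset.sum_le_sum fun i hi => by
          simp only [hf, Finset.mem_filter] at hi; omega
      _ ≤ ∑ i : Fin k, x e i :=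
        Finset.sum_le_sum_of_subset (Finset.subset_univ _)
  have hN : edgeCount E f = flowEdgeCount E x := by
    unfold edgeCount flowEdgeCount
    congr 1
    refine Finset.filter_congr fun e _ => ?_
    simp [hf, ← Finset.nonempty_iff_ne_empty, Finset.filter_nonempty_iff, Nat.pos_iff_ne_zero]
  refine ⟨hvalid, hL, hN, fun α hα0 hα1 => ?_⟩
  unfold labelingCost
  rw [hN]
  have : (labelCount E f : ℝ) ≤ (flowLabelCount E x : ℝ) := Nat.cast_le.mpr hL
  have h2 : α * (labelCount E f : ℝ) ≤ α * (flowLabelCount E x : ℝ) :=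
    mul_le_mul_of_nonneg_left this hα0
  linarith
end

section
/- Let G_i be a finite directed tree rooted at a (every vertex of G_i is reachable from a by a unique directed path, a has no incoming edge in G_i, and the underlying undirected graph of G_i is acyclic), and let T_i be a set of vertices of G_i with a ∉ T_i. Define a flow x on the edges of G_i by setting x(u,v) equal to the number of vertices of T_i lying in the subtree of G_i rooted at v (including v itself). Then x satisfies the MKL flow constraints for label i: the total flow out of a equals |T_i|, and for every vertex v ≠ a, the flow into v equals the flow out of v plus 1 if v ∈ T_i (and plus 0 otherwise); moreover x(e) > 0 for every edge e of G_i whose head's subtree contains a terminal, so when every leaf subtree contains a terminal the support of x is all of G_i. -/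
open Finset

open scoped Classical in
/-- `x(u,v)`: the number of terminals of `Ti` lying in the subtree rooted at `v`,
i.e. the number of `t ∈ Ti` reachable from `v` by a directed path in `F`
(including `v` itself). -/
noncomputable def subtreeTerminalCount {V : Type*} (F : Finset (V × V))
    (Ti : Finset V) (e : V × V) : ℕ :=
  (Ti.filter fun t => ReachIn (↑F : Set (V × V)) e.2 t).card

section Aux
variable {V : Type*} {F : Set (V × V)}

/-- travel avoiding the edge (u,v), assuming either the target is `u` or `v` can't reach it. -/
lemma avoid_edge {u v y : V} (hy : y = u ∨ ¬ ReachIn F v y) :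
    ∀ {x}, ReachIn F x y →
      Relation.ReflTransGen (fun p q => (p, q) ∈ F ∧ (p, q) ≠ (u, v)) x y := by
  intro x hx
  induction hx using Relation.ReflTransGen.head_induction_on with
  | refl => exact .refl
  | @head p q hstep htail ih =>
    by_cases h : (p, q) = (u, v)
    · have hp : p = u := (Prod.mk.injEq .. ▸ h).1
      have hq : q = v := (Prod.mk.injEq .. ▸ h).2
      rcases hy with rfl | hnr
      · rw [hp]
      · exact absurd (hq ▸ htail) hnr
    · exact .head ⟨hstep, h⟩ ih

lemma lift_reach (hanti : ∀ p q, (p, q) ∈ F → (q, p) ∉ F) (hloop : ∀ p, (p, p) ∉ F)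
    {u v x y : V} (huv : (u, v) ∈ F)
    (h : Relation.ReflTransGen (fun p q => (p, q) ∈ F ∧ (p, q) ≠ (u, v)) x y) :
    ((undirGraph F) \ SimpleGraph.fromEdgeSet {s(u, v)}).Reachable x y := by
  induction h with
  | refl => exact .rfl
  | @tail b c hstep hlast ih =>
    refine ih.trans (SimpleGraph.Adj.reachable ?_)
    obtain ⟨hbc, hne⟩ := hlast
    have hbne : b ≠ c := fun h => hloop b (h ▸ hbc)
    refine ⟨⟨hbne, Or.inl hbc⟩, ?_⟩
    simp only [SimpleGraph.fromEdgeSet_adj, Set.mem_singleton_iff]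
    rintro ⟨heq, -⟩
    rw [Sym2.eq_iff] at heq
    rcases heq with ⟨rfl, rfl⟩ | ⟨rfl, rfl⟩
    · exact hne rfl
    · exact hanti _ _ huv hbc

lemma noDirCycle (hacyc : UndirectedAcyclic F) {u v : V} (huv : (u, v) ∈ F) :
    ¬ ReachIn F v u := by
  intro hR
  obtain ⟨hloop, hanti, hac⟩ := hacyc
  have hne : u ≠ v := fun h => hloop u (h ▸ huv)
  have hadj : (undirGraph F).Adj u v := ⟨hne, Or.inl huv⟩
  have hbridge := (SimpleGraph.isAcyclic_iff_forall_adj_isBridge.mp hac) hadj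
  rw [SimpleGraph.isBridge_iff] at hbridge
  exact hbridge ((lift_reach hanti hloop huv (avoid_edge (Or.inl rfl) hR)).symm)

lemma pred_unique (hacyc : UndirectedAcyclic F) {a u u' v : V}
    (hu : ReachIn F a u) (hu' : ReachIn F a u')
    (huv : (u, v) ∈ F) (hu'v : (u', v) ∈ F) : u = u' := by
  by_contra hne
  obtain ⟨hloop, hanti, hac⟩ := hacyc
  have hvu : v ≠ u := fun h => hloop u (h ▸ huv)
  have hadj : (undirGraph F).Adj u v := ⟨fun h => hloop u (h ▸ huv), Or.inl huv⟩
  have hbridge := (SimpleGraph.isAcyclic_iff_forall_adj_isBridge.mp hac) hadj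
  rw [SimpleGraph.isBridge_iff] at hbridge
  apply hbridge
  have r1 := lift_reach hanti hloop huv (avoid_edge (Or.inl rfl) hu)
  have hnr : ¬ ReachIn F v u' := noDirCycle ⟨hloop, hanti, hac⟩ hu'v
  have r2 := lift_reach hanti hloop huv (avoid_edge (u := u) (v := v) (Or.inr hnr) hu')
  have r3 : ((undirGraph F) \ SimpleGraph.fromEdgeSet {s(u, v)}).Adj u' v := by
    refine ⟨⟨fun h => hloop u' (h ▸ hu'v), Or.inl hu'v⟩, ?_⟩
    simp only [SimpleGraph.fromEdgeSet_adj, Set.mem_singleton_iff]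
    rintro ⟨heq, -⟩
    rw [Sym2.eq_iff] at heq
    rcases heq with ⟨rfl, -⟩ | ⟨rfl, rfl⟩
    · exact hne rfl
    · exact hvu rfl
  exact r1.symm.trans (r2.trans r3.reachable)

lemma compar (hP1 : ∀ ⦃u u' v : V⦄, (u, v) ∈ F → (u', v) ∈ F → u = u')
    {t x y : V} (hx : ReachIn F x t) (hy : ReachIn F y t) :
    ReachIn F x y ∨ ReachIn F y x := by
  induction hx using Relation.ReflTransGen.head_induction_on with
  | refl => exact Or.inr hy
  | @head p q hstep htail ih =>
    rcases ih with h | h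
    · exact Or.inl (.head hstep h)
    · rcases h.cases_tail with rfl | ⟨z, hyz, hzq⟩
      · exact Or.inl (.single hstep)
      · exact Or.inr (hP1 hzq hstep ▸ hyz)

lemma succ_unique (hacyc : UndirectedAcyclic F)
    (hP1 : ∀ ⦃u u' v : V⦄, (u, v) ∈ F → (u', v) ∈ F → u = u')
    {v w w' t : V} (hw : (v, w) ∈ F) (hw' : (v, w') ∈ F)
    (hwt : ReachIn F w t) (hw't : ReachIn F w' t) : w = w' := by
  have key : ∀ {b c : V}, (v, b) ∈ F → (v, c) ∈ F → ReachIn F b c → b = c := by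
    intro b c hb hc hbc
    rcases hbc.cases_tail with rfl | ⟨z, hbz, hzc⟩
    · rfl
    · exact absurd (hP1 hzc hc ▸ hbz) (noDirCycle hacyc hb)
  rcases compar hP1 hwt hw't with h | h
  · exact key hw hw' h
  · exact (key hw' hw h).symm

end Aux

/-- Let `F` be the edge set of a finite directed tree `G_i` rooted at
`a` (every vertex of `G_i` is reachable from `a`, `a` has no incoming edge, and the
underlying undirected graph is acyclic), and let `Ti` be a set of vertices of `G_i`
with `a ∉ Ti`. Define the flow `x(u,v)` as the number of terminals of `Ti` in the
subtree rooted at `v`. Then `x` satisfies the MKL flow constraints for label `i`: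
the total flow out of `a` is `|Ti|`, and at every `v ≠ a` the incoming flow equals the
outgoing flow plus `1` if `v ∈ Ti`; moreover `x(e) > 0` for every edge whose head's
subtree contains a terminal, so if every leaf's subtree contains a terminal then the
support of `x` is all of `G_i`. -/
theorem tree_labeling_to_flow {V : Type*} [Fintype V] [DecidableEq V]
    (F : Finset (V × V)) (a : V) (Ti : Finset V) (haT : a ∉ Ti)
    (hreach : ∀ e ∈ F, ReachIn (↑F : Set (V × V)) a e.1 ∧ ReachIn (↑F : Set (V × V)) a e.2)
    (hnoina : ∀ u : V, (u, a) ∉ F)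
    (hacyc : UndirectedAcyclic (↑F : Set (V × V)))
    (hTvert : ∀ t ∈ Ti, ∃ e ∈ F, e.1 = t ∨ e.2 = t) :
    (∑ e ∈ F.filter (fun e => e.1 = a), subtreeTerminalCount F Ti e = Ti.card) ∧
    (∀ v : V, v ≠ a →
      ∑ e ∈ F.filter (fun e => e.2 = v), subtreeTerminalCount F Ti e
        = ∑ e ∈ F.filter (fun e => e.1 = v), subtreeTerminalCount F Ti e
            + (if v ∈ Ti then 1 else 0)) ∧
    (∀ e ∈ F, (∃ t ∈ Ti, ReachIn (↑F : Set (V × V)) e.2 t)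
      → 0 < subtreeTerminalCount F Ti e) ∧
    ((∀ v : V, (∃ e ∈ F, e.1 = v ∨ e.2 = v) → (∀ e ∈ F, e.1 ≠ v) → v ∈ Ti)
      → ∀ e ∈ F, 0 < subtreeTerminalCount F Ti e) := by
  classical
  have hP1 : ∀ ⦃u u' v : V⦄, (u, v) ∈ (↑F : Set (V × V)) → (u', v) ∈ (↑F : Set (V × V)) →
      u = u' := fun u u' v h h' =>
    pred_unique hacyc (hreach (u, v) (Finset.mem_coe.mp h)).1
      (hreach (u', v) (Finset.mem_coe.mp h')).1 h h'
  -- sum of counts over an edge set, per terminal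
  have hsum : ∀ s : Finset (V × V), ∑ e ∈ s, subtreeTerminalCount F Ti e
      = ∑ t ∈ Ti, (s.filter fun e => ReachIn (↑F : Set (V × V)) e.2 t).card := by
    intro s
    have h1 : ∀ e : V × V, subtreeTerminalCount F Ti e
        = ∑ t ∈ Ti, if ReachIn (↑F : Set (V × V)) e.2 t then 1 else 0 := by
      intro e; rw [subtreeTerminalCount, Finset.card_filter]
    rw [Finset.sum_congr rfl fun e _ => h1 e, Finset.sum_comm]
    exact Finset.sum_congr rfl fun t _ => (Finset.card_filter _ _).symm
  have hRa : ∀ t ∈ Ti, ReachIn (↑F : Set (V × V)) a t := by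
    intro t ht
    obtain ⟨e, he, h | h⟩ := hTvert t ht
    · exact h ▸ (hreach e he).1
    · exact h ▸ (hreach e he).2
  -- unique in-edge
  have indeg : ∀ v : V, v ≠ a → ReachIn (↑F : Set (V × V)) a v →
      ∃ z, (F.filter fun e => e.2 = v) = {(z, v)} := by
    intro v hva hav
    rcases hav.cases_tail with h | ⟨z, _, hzv⟩
    · exact absurd h hva
    · refine ⟨z, ?_⟩
      ext e
      simp only [Finset.mem_filter, Finset.mem_singleton]
      constructor
      · rintro ⟨heF, he2⟩
        have heF' : (e.1, v) ∈ (↑F : Set (V × V)) := by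
          rw [← he2]; exact heF
        have h1 : e.1 = z := hP1 heF' hzv
        exact Prod.ext h1 he2
      · rintro rfl
        exact ⟨Finset.mem_coe.mp hzv, rfl⟩
  -- exactly one out-edge towards t, when v reaches t and v ≠ t
  have houtcard : ∀ v t : V, ReachIn (↑F : Set (V × V)) v t → v ≠ t →
      ((F.filter fun e => e.1 = v).filter fun e => ReachIn (↑F : Set (V × V)) e.2 t).card
        = 1 := by
    intro v t hvt hne
    rcases hvt.cases_head with h | ⟨w, hvw, hwt⟩
    · exact absurd h hne
    refine Finset.card_eq_one.mpr ⟨(v, w), ?_⟩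
    ext e
    simp only [Finset.mem_filter, Finset.mem_singleton]
    constructor
    · rintro ⟨⟨heF, he1⟩, heR⟩
      have heF' : (v, e.2) ∈ (↑F : Set (V × V)) := by
        rw [← he1]; exact heF
      exact Prod.ext he1 (succ_unique hacyc hP1 heF' hvw heR hwt)
    · rintro rfl
      exact ⟨⟨Finset.mem_coe.mp hvw, rfl⟩, hwt⟩
  -- no out-edge towards t when v does not reach t
  have hout0 : ∀ v t : V, ¬ ReachIn (↑F : Set (V × V)) v t →
      ((F.filter fun e => e.1 = v).filter fun e => ReachIn (↑F : Set (V × V)) e.2 t).card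
        = 0 := by
    intro v t hvt
    rw [Finset.card_eq_zero, Finset.filter_eq_empty_iff]
    rintro e he hR
    rw [Finset.mem_filter] at he
    obtain ⟨heF, he1⟩ := he
    exact hvt (.head (show (v, e.2) ∈ (↑F : Set (V × V)) by rw [← he1]; exact heF) hR)
  -- no out-edge towards v itself
  have hself0 : ∀ v : V,
      ((F.filter fun e => e.1 = v).filter fun e => ReachIn (↑F : Set (V × V)) e.2 v).card
        = 0 := by
    intro v
    rw [Finset.card_eq_zero, Finset.filter_eq_empty_iff]
    rintro e he hR
    rw [Finset.mem_filter] at he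
    obtain ⟨heF, he1⟩ := he
    exact noDirCycle hacyc (show (v, e.2) ∈ (↑F : Set (V × V)) by rw [← he1]; exact heF) hR
  refine ⟨?_, ?_, ?_, ?_⟩
  · -- flow out of a is |Ti|
    rw [hsum]
    rw [Finset.sum_congr rfl fun t ht =>
      houtcard a t (hRa t ht) (fun h => haT (h ▸ ht))]
    simp
  · -- conservation at v ≠ a
    intro v hva
    rw [hsum, hsum]
    have hper : ∀ t ∈ Ti,
        ((F.filter fun e => e.2 = v).filter fun e => ReachIn (↑F : Set (V × V)) e.2 t).card
          = ((F.filter fun e => e.1 = v).filter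
                fun e => ReachIn (↑F : Set (V × V)) e.2 t).card
              + (if t = v then 1 else 0) := by
      intro t ht
      by_cases hvt : ReachIn (↑F : Set (V × V)) v t
      · have hRav : ReachIn (↑F : Set (V × V)) a v := by
          by_cases htv : t = v
          · exact htv ▸ hRa t ht
          · rcases hvt.cases_head with h | ⟨w, hvw, hwt⟩
            · exact absurd h.symm htv
            · exact (hreach (v, w) (Finset.mem_coe.mp hvw)).1
        obtain ⟨z, hz⟩ := indeg v hva hRav
        have hin : ((F.filter fun e => e.2 = v).filter
            fun e => ReachIn (↑F : Set (V × V)) e.2 t).card = 1 := by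
          rw [hz, Finset.filter_singleton, if_pos hvt, Finset.card_singleton]
        rw [hin]
        by_cases htv : t = v
        · subst htv
          rw [hself0, if_pos rfl]
        · rw [houtcard v t hvt (fun h => htv h.symm), if_neg htv]
      · have htv : t ≠ v := fun h => hvt (h ▸ Relation.ReflTransGen.refl)
        have hin0 : ((F.filter fun e => e.2 = v).filter
            fun e => ReachIn (↑F : Set (V × V)) e.2 t).card = 0 := by
          rw [Finset.card_eq_zero, Finset.filter_eq_empty_iff]
          rintro e he hR
          rw [Finset.mem_filter] at he
          exact hvt (he.2 ▸ hR)
        rw [hin0, hout0 v t hvt, if_neg htv]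
    rw [Finset.sum_congr rfl hper, Finset.sum_add_distrib]
    congr 1
    rw [Finset.sum_ite_eq' Ti v (fun _ => 1)]
  · -- positivity
    rintro e _ ⟨t, ht, hR⟩
    rw [subtreeTerminalCount]
    exact Finset.card_pos.mpr ⟨t, Finset.mem_filter.mpr ⟨ht, hR⟩⟩
  · -- full support under leaf condition
    intro hleaf e he
    -- every vertex reaches a sink which is a vertex
    have sink : ∀ n (v : V),
        (Finset.univ.filter fun w => ReachIn (↑F : Set (V × V)) v w).card = n →
        (∃ e ∈ F, e.1 = v ∨ e.2 = v) →
        ∃ t, ReachIn (↑F : Set (V × V)) v t ∧ (∀ e ∈ F, e.1 ≠ t) ∧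
          (∃ e ∈ F, e.1 = t ∨ e.2 = t) := by
      intro n
      induction n using Nat.strong_induction_on with
      | _ n ih =>
        intro v hn hv
        by_cases hout : ∃ e ∈ F, e.1 = v
        · obtain ⟨e', he', h1⟩ := hout
          have hvw : (v, e'.2) ∈ (↑F : Set (V × V)) := by
            rw [← h1]; exact Finset.mem_coe.mpr he'
          have hssub : (Finset.univ.filter fun w => ReachIn (↑F : Set (V × V)) e'.2 w)
              ⊂ (Finset.univ.filter fun w => ReachIn (↑F : Set (V × V)) v w) := by
            refine Finset.ssubset_iff_of_subset ?_ |>.mpr ?_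
            · intro x hx
              rw [Finset.mem_filter] at hx ⊢
              exact ⟨hx.1, .head hvw hx.2⟩
            · refine ⟨v, ?_, ?_⟩
              · exact Finset.mem_filter.mpr ⟨Finset.mem_univ v, .refl⟩
              · rw [Finset.mem_filter]
                rintro ⟨-, hR⟩
                exact noDirCycle hacyc hvw hR
          have hlt := Finset.card_lt_card hssub
          rw [hn] at hlt
          obtain ⟨t, htR, htout, htv⟩ := ih _ hlt e'.2 rfl ⟨e', he', Or.inr rfl⟩
          exact ⟨t, .head hvw htR, htout, htv⟩
        · push_neg at hout
          exact ⟨v, .refl, hout, hv⟩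
    obtain ⟨t, htR, htout, htv⟩ := sink _ e.2 rfl ⟨e, he, Or.inr rfl⟩
    have htTi : t ∈ Ti := hleaf t htv htout
    rw [subtreeTerminalCount]
    exact Finset.card_pos.mpr ⟨t, Finset.mem_filter.mpr ⟨htTi, htR⟩⟩
end

section
/- There exists an MKL instance with two labels (k=2), terminal sets T_1 and T_2, and α = 1/2, such that no valid labeling of minimum cost has all of its labeled edges contained in the union of the edge sets of a minimum directed Steiner tree for T_1 and a minimum directed Steiner tree for T_2; in particular, the optimal MKL solution for α=1/2 is in general neither the union of label-specific minimum Steiner trees nor a subgraph of that union. -/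
open Finset

/-- `F` is a minimum directed Steiner tree for terminal set `T` rooted at `a` in the
network `E`: an edge subset of `E` of minimum cardinality from which every terminal of
`T` is reachable from `a`. -/
def IsMinSteiner {V : Type*} (E : Finset (V × V)) (a : V) (T : Finset V)
    (F : Finset (V × V)) : Prop :=
  F ⊆ E ∧ (∀ t ∈ T, ReachIn (↑F : Set (V × V)) a t) ∧
  ∀ F' : Finset (V × V), F' ⊆ E → (∀ t ∈ T, ReachIn (↑F' : Set (V × V)) a t) →
    F.card ≤ F'.card

namespace MKLaux

abbrev V16 := Fin 16

def E0 : Finset (V16 × V16) :=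
  {(0,1),(1,2),(2,3),(3,4),(4,5),
   (0,6),(6,7),(7,8),(8,9),(9,10),
   (0,11),(11,12),(12,13),(13,14),(14,15),(15,5),(15,10)}

def P1 : Finset (V16 × V16) := {(0,1),(1,2),(2,3),(3,4),(4,5)}
def P2 : Finset (V16 × V16) := {(0,6),(6,7),(7,8),(8,9),(9,10)}
def Q5 : Finset (V16 × V16) := {(0,11),(11,12),(12,13),(13,14),(14,15),(15,5)}
def Q10 : Finset (V16 × V16) := {(0,11),(11,12),(12,13),(13,14),(14,15),(15,10)}

lemma step {S : Set (V16 × V16)} {t : V16} (h : ReachIn S 0 t) (ht : t ≠ 0) :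
    ∃ u, ReachIn S 0 u ∧ (u, t) ∈ S := by
  rcases Relation.ReflTransGen.cases_tail h with h0 | ⟨c, hc, hct⟩
  · exact absurd h0 ht
  · exact ⟨c, hc, hct⟩

lemma pred1 : ∀ u : V16, (u, (1:V16)) ∈ E0 → u = 0 := by decide
lemma pred2 : ∀ u : V16, (u, (2:V16)) ∈ E0 → u = 1 := by decide
lemma pred3 : ∀ u : V16, (u, (3:V16)) ∈ E0 → u = 2 := by decide
lemma pred4 : ∀ u : V16, (u, (4:V16)) ∈ E0 → u = 3 := by decide
lemma pred5 : ∀ u : V16, (u, (5:V16)) ∈ E0 → u = 4 ∨ u = 15 := by decide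
lemma pred6 : ∀ u : V16, (u, (6:V16)) ∈ E0 → u = 0 := by decide
lemma pred7 : ∀ u : V16, (u, (7:V16)) ∈ E0 → u = 6 := by decide
lemma pred8 : ∀ u : V16, (u, (8:V16)) ∈ E0 → u = 7 := by decide
lemma pred9 : ∀ u : V16, (u, (9:V16)) ∈ E0 → u = 8 := by decide
lemma pred10 : ∀ u : V16, (u, (10:V16)) ∈ E0 → u = 9 ∨ u = 15 := by decide
lemma pred11 : ∀ u : V16, (u, (11:V16)) ∈ E0 → u = 0 := by decide
lemma pred12 : ∀ u : V16, (u, (12:V16)) ∈ E0 → u = 11 := by decide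
lemma pred13 : ∀ u : V16, (u, (13:V16)) ∈ E0 → u = 12 := by decide
lemma pred14 : ∀ u : V16, (u, (14:V16)) ∈ E0 → u = 13 := by decide
lemma pred15 : ∀ u : V16, (u, (15:V16)) ∈ E0 → u = 14 := by decide

lemma reach15 {S : Set (V16 × V16)} (hS : ∀ e ∈ S, e ∈ E0) (h : ReachIn S 0 15) :
    ((0,11) : V16 × V16) ∈ S ∧ ((11,12) : V16 × V16) ∈ S ∧ ((12,13) : V16 × V16) ∈ S ∧
      ((13,14) : V16 × V16) ∈ S ∧ ((14,15) : V16 × V16) ∈ S := by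
  obtain ⟨u, hu, hmem⟩ := step h (by decide)
  obtain rfl := pred15 u (hS _ hmem)
  obtain ⟨u, hu, hmem14⟩ := step hu (by decide)
  obtain rfl := pred14 u (hS _ hmem14)
  obtain ⟨u, hu, hmem13⟩ := step hu (by decide)
  obtain rfl := pred13 u (hS _ hmem13)
  obtain ⟨u, hu, hmem12⟩ := step hu (by decide)
  obtain rfl := pred12 u (hS _ hmem12)
  obtain ⟨u, hu, hmem11⟩ := step hu (by decide)
  obtain rfl := pred11 u (hS _ hmem11)
  exact ⟨hmem11, hmem12, hmem13, hmem14, hmem⟩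

lemma reach5 {S : Set (V16 × V16)} (hS : ∀ e ∈ S, e ∈ E0) (h : ReachIn S 0 5) :
    (∀ e ∈ P1, e ∈ S) ∨ (∀ e ∈ Q5, e ∈ S) := by
  obtain ⟨u, hu, hmem⟩ := step h (by decide)
  rcases pred5 u (hS _ hmem) with rfl | rfl
  · left
    obtain ⟨u, hu, hmem4⟩ := step hu (by decide)
    obtain rfl := pred4 u (hS _ hmem4)
    obtain ⟨u, hu, hmem3⟩ := step hu (by decide)
    obtain rfl := pred3 u (hS _ hmem3)
    obtain ⟨u, hu, hmem2⟩ := step hu (by decide)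
    obtain rfl := pred2 u (hS _ hmem2)
    obtain ⟨u, hu, hmem1⟩ := step hu (by decide)
    obtain rfl := pred1 u (hS _ hmem1)
    intro e he
    fin_cases he <;> assumption
  · right
    obtain ⟨h1, h2, h3, h4, h5⟩ := reach15 hS hu
    intro e he
    fin_cases he <;> assumption

lemma reach10 {S : Set (V16 × V16)} (hS : ∀ e ∈ S, e ∈ E0) (h : ReachIn S 0 10) :
    (∀ e ∈ P2, e ∈ S) ∨ (∀ e ∈ Q10, e ∈ S) := by
  obtain ⟨u, hu, hmem⟩ := step h (by decide)
  rcases pred10 u (hS _ hmem) with rfl | rfl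
  · left
    obtain ⟨u, hu, hmem4⟩ := step hu (by decide)
    obtain rfl := pred9 u (hS _ hmem4)
    obtain ⟨u, hu, hmem3⟩ := step hu (by decide)
    obtain rfl := pred8 u (hS _ hmem3)
    obtain ⟨u, hu, hmem2⟩ := step hu (by decide)
    obtain rfl := pred7 u (hS _ hmem2)
    obtain ⟨u, hu, hmem1⟩ := step hu (by decide)
    obtain rfl := pred6 u (hS _ hmem1)
    intro e he
    fin_cases he <;> assumption
  · right
    obtain ⟨h1, h2, h3, h4, h5⟩ := reach15 hS hu
    intro e he
    fin_cases he <;> assumption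

lemma reachP1 {S : Set (V16 × V16)} (h : ∀ e ∈ P1, e ∈ S) : ReachIn S 0 5 :=
  (((((Relation.ReflTransGen.refl.tail (h (0,1) (by decide))).tail
    (h (1,2) (by decide))).tail (h (2,3) (by decide))).tail
    (h (3,4) (by decide))).tail (h (4,5) (by decide)))

lemma reachP2 {S : Set (V16 × V16)} (h : ∀ e ∈ P2, e ∈ S) : ReachIn S 0 10 :=
  (((((Relation.ReflTransGen.refl.tail (h (0,6) (by decide))).tail
    (h (6,7) (by decide))).tail (h (7,8) (by decide))).tail
    (h (8,9) (by decide))).tail (h (9,10) (by decide)))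

lemma reachQ5 {S : Set (V16 × V16)} (h : ∀ e ∈ Q5, e ∈ S) : ReachIn S 0 5 :=
  ((((((Relation.ReflTransGen.refl.tail (h (0,11) (by decide))).tail
    (h (11,12) (by decide))).tail (h (12,13) (by decide))).tail
    (h (13,14) (by decide))).tail (h (14,15) (by decide))).tail (h (15,5) (by decide)))

lemma reachQ10 {S : Set (V16 × V16)} (h : ∀ e ∈ Q10, e ∈ S) : ReachIn S 0 10 :=
  ((((((Relation.ReflTransGen.refl.tail (h (0,11) (by decide))).tail
    (h (11,12) (by decide))).tail (h (12,13) (by decide))).tail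
    (h (13,14) (by decide))).tail (h (14,15) (by decide))).tail (h (15,10) (by decide)))

/-- the shared-trunk labeling -/
def gsh (e : V16 × V16) : Finset (Fin 2) :=
  if e = (0,11) ∨ e = (11,12) ∨ e = (12,13) ∨ e = (13,14) ∨ e = (14,15) then {0,1}
  else if e = (15,5) then {0} else if e = (15,10) then {1} else ∅

def T0 : Fin 2 → Finset V16 := ![{5}, {10}]

lemma gsh_valid : ValidLabeling E0 0 T0 gsh := by
  intro i t ht
  fin_cases i
  · have ht' : t = 5 := by simpa [T0] using ht
    subst ht'
    exact reachQ5 (by intro e he; fin_cases he <;> exact ⟨by decide, by decide⟩)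
  · have ht' : t = 10 := by simpa [T0] using ht
    subst ht'
    exact reachQ10 (by intro e he; fin_cases he <;> exact ⟨by decide, by decide⟩)

lemma gsh_labelCount : labelCount E0 gsh = 12 := by decide
lemma gsh_edgeCount : edgeCount E0 gsh = 7 := by decide

end MKLaux


/-- There is an MKL instance with two labels and `α = 1/2` such that
no valid labeling of minimum cost has all of its labeled edges contained in the union
of (the edge sets of) a minimum directed Steiner tree for `T 0` and a minimum directed
Steiner tree for `T 1`: the optimal MKL solution is in general neither the union of
label-specific minimum Steiner trees nor a subgraph of that union. -/
theorem mkl_not_union_of_steiner_trees :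
    ∃ (n : ℕ) (E : Finset (Fin n × Fin n)) (a : Fin n) (T : Fin 2 → Finset (Fin n)),
      (∀ i, a ∉ T i) ∧
      (∃ f : Fin n × Fin n → Finset (Fin 2), ValidLabeling E a T f) ∧
      ∀ f : Fin n × Fin n → Finset (Fin 2), ValidLabeling E a T f →
        (∀ g : Fin n × Fin n → Finset (Fin 2), ValidLabeling E a T g →
          labelingCost (1/2) E f ≤ labelingCost (1/2) E g) →
        ∀ F₁ F₂ : Finset (Fin n × Fin n),
          IsMinSteiner E a (T 0) F₁ → IsMinSteiner E a (T 1) F₂ →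
          ¬ (E.filter (fun e => f e ≠ ∅) ⊆ F₁ ∪ F₂) := by
  classical
  refine ⟨16, MKLaux.E0, 0, MKLaux.T0, ?_, ⟨MKLaux.gsh, MKLaux.gsh_valid⟩, ?_⟩
  · intro i; fin_cases i <;> decide
  · intro f hf hopt F₁ F₂ hF₁ hF₂ hsub
    have h5T : (5 : MKLaux.V16) ∈ MKLaux.T0 0 := by decide
    have h10T : (10 : MKLaux.V16) ∈ MKLaux.T0 1 := by decide
    -- the minimum Steiner trees are exactly the two direct paths
    have hc1 : F₁.card ≤ 5 := by
      have h := hF₁.2.2 MKLaux.P1 (by decide)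
        (by
          intro t ht
          have ht' : t = 5 := by simpa [MKLaux.T0] using ht
          subst ht'
          exact MKLaux.reachP1 (fun e he => Finset.mem_coe.mpr he))
      calc F₁.card ≤ MKLaux.P1.card := h
        _ = 5 := by decide
    have hc2 : F₂.card ≤ 5 := by
      have h := hF₂.2.2 MKLaux.P2 (by decide)
        (by
          intro t ht
          have ht' : t = 10 := by simpa [MKLaux.T0] using ht
          subst ht'
          exact MKLaux.reachP2 (fun e he => Finset.mem_coe.mpr he))
      calc F₂.card ≤ MKLaux.P2.card := h
        _ = 5 := by decide
    have hS1 : ∀ e ∈ (↑F₁ : Set (MKLaux.V16 × MKLaux.V16)), e ∈ MKLaux.E0 :=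
      fun e he => hF₁.1 (Finset.mem_coe.mp he)
    have hS2 : ∀ e ∈ (↑F₂ : Set (MKLaux.V16 × MKLaux.V16)), e ∈ MKLaux.E0 :=
      fun e he => hF₂.1 (Finset.mem_coe.mp he)
    have hF1eq : F₁ = MKLaux.P1 := by
      rcases MKLaux.reach5 hS1 (hF₁.2.1 5 h5T) with hP | hQ
      · exact (Finset.eq_of_subset_of_card_le
          (fun e he => Finset.mem_coe.mp (hP e he))
          (by calc F₁.card ≤ 5 := hc1
                _ = MKLaux.P1.card := by decide)).symm
      · exfalso
        have hsubQ : MKLaux.Q5 ⊆ F₁ := fun e he => Finset.mem_coe.mp (hQ e he)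
        have := Finset.card_le_card hsubQ
        have h6 : MKLaux.Q5.card = 6 := by decide
        omega
    have hF2eq : F₂ = MKLaux.P2 := by
      rcases MKLaux.reach10 hS2 (hF₂.2.1 10 h10T) with hP | hQ
      · exact (Finset.eq_of_subset_of_card_le
          (fun e he => Finset.mem_coe.mp (hP e he))
          (by calc F₂.card ≤ 5 := hc2
                _ = MKLaux.P2.card := by decide)).symm
      · exfalso
        have hsubQ : MKLaux.Q10 ⊆ F₂ := fun e he => Finset.mem_coe.mp (hQ e he)
        have := Finset.card_le_card hsubQ
        have h6 : MKLaux.Q10.card = 6 := by decide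
        omega
    subst hF1eq hF2eq
    -- the optimal labeling must then label the two direct paths
    have hS0 : ∀ e ∈ EdgesWith MKLaux.E0 f 0, e ∈ MKLaux.E0 := fun e he => he.1
    have hS0' : ∀ e ∈ EdgesWith MKLaux.E0 f 1, e ∈ MKLaux.E0 := fun e he => he.1
    have hA : ∀ e ∈ MKLaux.P1, e ∈ EdgesWith MKLaux.E0 f 0 := by
      rcases MKLaux.reach5 hS0 (hf 0 5 h5T) with hP | hQ
      · exact hP
      · exfalso
        have h011 := hQ (0,11) (by decide)
        have : ((0,11) : MKLaux.V16 × MKLaux.V16) ∈ MKLaux.P1 ∪ MKLaux.P2 :=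
          hsub (Finset.mem_filter.mpr ⟨h011.1, Finset.ne_empty_of_mem h011.2⟩)
        revert this; decide
    have hB : ∀ e ∈ MKLaux.P2, e ∈ EdgesWith MKLaux.E0 f 1 := by
      rcases MKLaux.reach10 hS0' (hf 1 10 h10T) with hP | hQ
      · exact hP
      · exfalso
        have h011 := hQ (0,11) (by decide)
        have : ((0,11) : MKLaux.V16 × MKLaux.V16) ∈ MKLaux.P1 ∪ MKLaux.P2 :=
          hsub (Finset.mem_filter.mpr ⟨h011.1, Finset.ne_empty_of_mem h011.2⟩)
        revert this; decide
    -- cost lower bound 10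
    have hone : ∀ e ∈ MKLaux.P1 ∪ MKLaux.P2, 1 ≤ (f e).card := by
      intro e he
      rcases Finset.mem_union.mp he with h | h
      · exact Finset.card_pos.mpr ⟨0, (hA e h).2⟩
      · exact Finset.card_pos.mpr ⟨1, (hB e h).2⟩
    have hL : 10 ≤ labelCount MKLaux.E0 f := by
      calc (10 : ℕ) = ∑ _e ∈ MKLaux.P1 ∪ MKLaux.P2, 1 := by decide
        _ ≤ ∑ e ∈ MKLaux.P1 ∪ MKLaux.P2, (f e).card := Finset.sum_le_sum hone
        _ ≤ ∑ e ∈ MKLaux.E0, (f e).card :=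
            Finset.sum_le_sum_of_subset (by decide)
        _ = labelCount MKLaux.E0 f := rfl
    have hN : 10 ≤ edgeCount MKLaux.E0 f := by
      have hsubN : MKLaux.P1 ∪ MKLaux.P2 ⊆ MKLaux.E0.filter (fun e => f e ≠ ∅) := by
        intro e he
        refine Finset.mem_filter.mpr ⟨?_, ?_⟩
        · exact (by decide : MKLaux.P1 ∪ MKLaux.P2 ⊆ MKLaux.E0) he
        · rcases Finset.mem_union.mp he with h | h
          · exact Finset.ne_empty_of_mem (hA e h).2
          · exact Finset.ne_empty_of_mem (hB e h).2
      calc (10 : ℕ) = (MKLaux.P1 ∪ MKLaux.P2).card := by decide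
        _ ≤ _ := Finset.card_le_card hsubN
    -- but f has cost at most 9.5
    have hcost := hopt MKLaux.gsh MKLaux.gsh_valid
    have hL' : (10 : ℝ) ≤ (labelCount MKLaux.E0 f : ℝ) := by exact_mod_cast hL
    have hN' : (10 : ℝ) ≤ (edgeCount MKLaux.E0 f : ℝ) := by exact_mod_cast hN
    rw [labelingCost, labelingCost, MKLaux.gsh_labelCount, MKLaux.gsh_edgeCount] at hcost
    have h12 : ((12:ℕ):ℝ) = 12 := by norm_num
    have h7 : ((7:ℕ):ℝ) = 7 := by norm_num
    linarith
end

section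
/- There exists an MKL instance with two labels (k=2), terminal sets T_1 and T_2, and α = 0.6, such that for every valid labeling f of minimum cost, the set of labeled edges {e ∈ E : f(e) ≠ ∅} is not a minimum-cardinality edge subset connecting the anchor a to all terminals of T_1 ∪ T_2; in particular, the optimal MKL solution for α=0.6 is in general not a minimum directed Steiner tree over the union of all terminal sets. Specifically, there is an instance admitting a Steiner tree over all terminals with 6 edges but requiring 8 label assignments, while a valid labeling using 7 edges and 7 label assignments achieves strictly smaller cost at α=0.6. -/
open Finset

/- ### Auxiliary construction -/

/-- The edge set of the counterexample graph on 12 vertices: a shared path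
`0→1→2→3→4` with branches `4→5`, `4→6`, plus disjoint paths `0→7→8→5` and
`0→9→10→11→6`. -/
def MKL.E0 : Finset (Fin 12 × Fin 12) :=
  {(0,1),(1,2),(2,3),(3,4),(4,5),(4,6),(0,7),(7,8),(8,5),(0,9),(9,10),(10,11),(11,6)}

/-- Terminal sets: `T 0 = {5}`, `T 1 = {6}`. -/
def MKL.T0 : Fin 2 → Finset (Fin 12) := fun i => if i = 0 then {5} else {6}

/-- The 6-edge Steiner tree through the shared path. -/
def MKL.F0 : Finset (Fin 12 × Fin 12) := {(0,1),(1,2),(2,3),(3,4),(4,5),(4,6)}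

/-- The labeling using the two disjoint direct paths. -/
def MKL.g0 : Fin 12 × Fin 12 → Finset (Fin 2) := fun e =>
  if e = (0,7) ∨ e = (7,8) ∨ e = (8,5) then {0}
  else if e = (0,9) ∨ e = (9,10) ∨ e = (10,11) ∨ e = (11,6) then {1} else ∅

lemma MKL.rstep {S : Set (Fin 12 × Fin 12)} {a c : Fin 12} (b : Fin 12)
    (h : (a, b) ∈ S) (h2 : ReachIn S b c) : ReachIn S a c :=
  Relation.ReflTransGen.head h h2

/-- Invariant describing which edges must be present for each reachable vertex. -/
def MKL.Q (S : Set (Fin 12 × Fin 12)) (v : Fin 12) : Prop :=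
  v = 0 ∨
  (v = 1 ∧ (0,1) ∈ S) ∨
  (v = 2 ∧ (0,1) ∈ S ∧ (1,2) ∈ S) ∨
  (v = 3 ∧ (0,1) ∈ S ∧ (1,2) ∈ S ∧ (2,3) ∈ S) ∨
  (v = 4 ∧ (0,1) ∈ S ∧ (1,2) ∈ S ∧ (2,3) ∈ S ∧ (3,4) ∈ S) ∨
  (v = 5 ∧ (((0,1) ∈ S ∧ (1,2) ∈ S ∧ (2,3) ∈ S ∧ (3,4) ∈ S ∧ (4,5) ∈ S) ∨
            ((0,7) ∈ S ∧ (7,8) ∈ S ∧ (8,5) ∈ S))) ∨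
  (v = 6 ∧ (((0,1) ∈ S ∧ (1,2) ∈ S ∧ (2,3) ∈ S ∧ (3,4) ∈ S ∧ (4,6) ∈ S) ∨
            ((0,9) ∈ S ∧ (9,10) ∈ S ∧ (10,11) ∈ S ∧ (11,6) ∈ S))) ∨
  (v = 7 ∧ (0,7) ∈ S) ∨
  (v = 8 ∧ (0,7) ∈ S ∧ (7,8) ∈ S) ∨
  (v = 9 ∧ (0,9) ∈ S) ∨
  (v = 10 ∧ (0,9) ∈ S ∧ (9,10) ∈ S) ∨
  (v = 11 ∧ (0,9) ∈ S ∧ (9,10) ∈ S ∧ (10,11) ∈ S)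

lemma MKL.reach_Q {S : Set (Fin 12 × Fin 12)} (hS : S ⊆ ↑MKL.E0) {v : Fin 12}
    (h : ReachIn S 0 v) : MKL.Q S v := by
  induction h with
  | refl => left; rfl
  | @tail b c hab hbc ih =>
    have he : (b, c) ∈ MKL.E0 := by exact_mod_cast hS hbc
    simp only [MKL.E0, Finset.mem_insert, Finset.mem_singleton, Prod.mk.injEq] at he
    unfold MKL.Q at ih ⊢
    rcases he with ⟨rfl,rfl⟩|⟨rfl,rfl⟩|⟨rfl,rfl⟩|⟨rfl,rfl⟩|⟨rfl,rfl⟩|⟨rfl,rfl⟩|⟨rfl,rfl⟩|⟨rfl,rfl⟩|⟨rfl,rfl⟩|⟨rfl,rfl⟩|⟨rfl,rfl⟩|⟨rfl,rfl⟩|⟨rfl,rfl⟩ <;>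
      simp only [Fin.reduceEq, false_and, false_or, true_and, or_false] at ih ⊢ <;> tauto

lemma MKL.reach_t1 {S : Set (Fin 12 × Fin 12)} (hS : S ⊆ ↑MKL.E0)
    (h : ReachIn S 0 5) :
    ((0,1) ∈ S ∧ (1,2) ∈ S ∧ (2,3) ∈ S ∧ (3,4) ∈ S ∧ (4,5) ∈ S) ∨
    ((0,7) ∈ S ∧ (7,8) ∈ S ∧ (8,5) ∈ S) := by
  have hq := MKL.reach_Q hS h
  simp only [MKL.Q, Fin.reduceEq, false_and, false_or, true_and, or_false] at hq
  tauto

lemma MKL.reach_t2 {S : Set (Fin 12 × Fin 12)} (hS : S ⊆ ↑MKL.E0)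
    (h : ReachIn S 0 6) :
    ((0,1) ∈ S ∧ (1,2) ∈ S ∧ (2,3) ∈ S ∧ (3,4) ∈ S ∧ (4,6) ∈ S) ∨
    ((0,9) ∈ S ∧ (9,10) ∈ S ∧ (10,11) ∈ S ∧ (11,6) ∈ S) := by
  have hq := MKL.reach_Q hS h
  simp only [MKL.Q, Fin.reduceEq, false_and, false_or, true_and, or_false] at hq
  tauto

lemma MKL.g0_valid : ValidLabeling MKL.E0 0 MKL.T0 MKL.g0 := by
  intro i t ht
  fin_cases i <;> simp [MKL.T0] at ht <;> subst ht
  · exact MKL.rstep 7 ⟨by decide, by decide⟩ (MKL.rstep 8 ⟨by decide, by decide⟩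
      (MKL.rstep 5 ⟨by decide, by decide⟩ .refl))
  · exact MKL.rstep 9 ⟨by decide, by decide⟩ (MKL.rstep 10 ⟨by decide, by decide⟩
      (MKL.rstep 11 ⟨by decide, by decide⟩ (MKL.rstep 6 ⟨by decide, by decide⟩ .refl)))

lemma MKL.F0_conn : ∀ t ∈ MKL.T0 0 ∪ MKL.T0 1,
    ReachIn (↑MKL.F0 : Set (Fin 12 × Fin 12)) 0 t := by
  intro t ht
  simp [MKL.T0] at ht
  have c4 : ReachIn (↑MKL.F0 : Set (Fin 12 × Fin 12)) 0 4 :=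
    MKL.rstep 1 (Finset.mem_coe.2 (by decide)) (MKL.rstep 2 (Finset.mem_coe.2 (by decide))
      (MKL.rstep 3 (Finset.mem_coe.2 (by decide)) (MKL.rstep 4 (Finset.mem_coe.2 (by decide)) .refl)))
  rcases ht with rfl | rfl
  · exact c4.tail (Finset.mem_coe.2 (by decide))
  · exact c4.tail (Finset.mem_coe.2 (by decide))

lemma MKL.card_fin2 : ∀ s : Finset (Fin 2),
    s.card = (if (0:Fin 2) ∈ s then 1 else 0) + (if (1:Fin 2) ∈ s then 1 else 0) := by decide

lemma MKL.labelCount_split (f : Fin 12 × Fin 12 → Finset (Fin 2)) :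
    labelCount MKL.E0 f =
      (MKL.E0.filter fun e => (0:Fin 2) ∈ f e).card +
      (MKL.E0.filter fun e => (1:Fin 2) ∈ f e).card := by
  simp only [labelCount, Finset.card_filter]
  rw [← Finset.sum_add_distrib]
  exact Finset.sum_congr rfl fun e _ => MKL.card_fin2 (f e)

/-- Key estimate: if both labels are forced through the shared path, then `L(f) ≥ 10`. -/
lemma MKL.ten_le_labelCount {f : Fin 12 × Fin 12 → Finset (Fin 2)}
    (hA : (0,1) ∈ EdgesWith MKL.E0 f 0 ∧ (1,2) ∈ EdgesWith MKL.E0 f 0 ∧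
          (2,3) ∈ EdgesWith MKL.E0 f 0 ∧ (3,4) ∈ EdgesWith MKL.E0 f 0 ∧
          (4,5) ∈ EdgesWith MKL.E0 f 0)
    (hC : (0,1) ∈ EdgesWith MKL.E0 f 1 ∧ (1,2) ∈ EdgesWith MKL.E0 f 1 ∧
          (2,3) ∈ EdgesWith MKL.E0 f 1 ∧ (3,4) ∈ EdgesWith MKL.E0 f 1 ∧
          (4,6) ∈ EdgesWith MKL.E0 f 1) :
    10 ≤ labelCount MKL.E0 f := by
  obtain ⟨a1, a2, a3, a4, a5⟩ := hA
  obtain ⟨c1, c2, c3, c4, c5⟩ := hC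
  have h0 : ({(0,1),(1,2),(2,3),(3,4),(4,5)} : Finset (Fin 12 × Fin 12)) ⊆
      MKL.E0.filter fun e => (0:Fin 2) ∈ f e := by
    intro x hx
    simp only [Finset.mem_insert, Finset.mem_singleton] at hx
    rcases hx with rfl|rfl|rfl|rfl|rfl
    · exact Finset.mem_filter.2 ⟨a1.1, a1.2⟩
    · exact Finset.mem_filter.2 ⟨a2.1, a2.2⟩
    · exact Finset.mem_filter.2 ⟨a3.1, a3.2⟩
    · exact Finset.mem_filter.2 ⟨a4.1, a4.2⟩
    · exact Finset.mem_filter.2 ⟨a5.1, a5.2⟩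
  have h1 : ({(0,1),(1,2),(2,3),(3,4),(4,6)} : Finset (Fin 12 × Fin 12)) ⊆
      MKL.E0.filter fun e => (1:Fin 2) ∈ f e := by
    intro x hx
    simp only [Finset.mem_insert, Finset.mem_singleton] at hx
    rcases hx with rfl|rfl|rfl|rfl|rfl
    · exact Finset.mem_filter.2 ⟨c1.1, c1.2⟩
    · exact Finset.mem_filter.2 ⟨c2.1, c2.2⟩
    · exact Finset.mem_filter.2 ⟨c3.1, c3.2⟩
    · exact Finset.mem_filter.2 ⟨c4.1, c4.2⟩
    · exact Finset.mem_filter.2 ⟨c5.1, c5.2⟩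
  have k0 := Finset.card_le_card h0
  have k1 := Finset.card_le_card h1
  rw [show ({(0,1),(1,2),(2,3),(3,4),(4,5)} : Finset (Fin 12 × Fin 12)).card = 5 from by decide] at k0
  rw [show ({(0,1),(1,2),(2,3),(3,4),(4,6)} : Finset (Fin 12 × Fin 12)).card = 5 from by decide] at k1
  rw [MKL.labelCount_split]
  omega

/-- If a valid labeling has all its labeled edges inside the 6-edge tree `F0`,
then both labels run through the shared path, so `L(f) ≥ 10` and `N(f) ≥ 6`. -/
lemma MKL.key {f : Fin 12 × Fin 12 → Finset (Fin 2)}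
    (hf : ValidLabeling MKL.E0 0 MKL.T0 f)
    (hsub : MKL.E0.filter (fun e => f e ≠ ∅) ⊆ MKL.F0) :
    10 ≤ labelCount MKL.E0 f ∧ 6 ≤ edgeCount MKL.E0 f := by
  have memsup : ∀ (i : Fin 2) (e : Fin 12 × Fin 12), e ∈ EdgesWith MKL.E0 f i →
      e ∈ MKL.E0.filter fun e => f e ≠ ∅ := fun i e he =>
    Finset.mem_filter.2 ⟨he.1, Finset.ne_empty_of_mem he.2⟩
  have hsubE : ∀ i : Fin 2, EdgesWith MKL.E0 f i ⊆ ↑MKL.E0 :=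
    fun i e he => Finset.mem_coe.2 he.1
  have h0 := MKL.reach_t1 (hsubE 0) (hf 0 5 (by decide))
  have h1 := MKL.reach_t2 (hsubE 1) (hf 1 6 (by decide))
  rcases h0 with hA | hB
  swap
  · exact absurd (hsub (memsup 0 _ hB.1)) (by decide)
  rcases h1 with hC | hD
  swap
  · exact absurd (hsub (memsup 1 _ hD.1)) (by decide)
  refine ⟨MKL.ten_le_labelCount hA hC, ?_⟩
  have hF : MKL.F0 ⊆ MKL.E0.filter fun e => f e ≠ ∅ := by
    intro x hx
    simp only [MKL.F0, Finset.mem_insert, Finset.mem_singleton] at hx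
    rcases hx with rfl|rfl|rfl|rfl|rfl|rfl
    · exact memsup 0 _ hA.1
    · exact memsup 0 _ hA.2.1
    · exact memsup 0 _ hA.2.2.1
    · exact memsup 0 _ hA.2.2.2.1
    · exact memsup 0 _ hA.2.2.2.2
    · exact memsup 1 _ hC.2.2.2.2
  have := Finset.card_le_card hF
  rw [show MKL.F0.card = 6 from by decide] at this
  exact this

/-- There is an MKL instance with two labels and `α = 0.6` such that
for every valid labeling `f` of minimum cost, the set of labeled edges of `f` is not a
minimum-cardinality edge subset of `E` connecting the anchor `a` to all terminals of
`T 0 ∪ T 1`: the optimal MKL solution is in general not a minimum directed Steiner tree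
over the union of the terminal sets. Specifically, the instance admits a Steiner tree
over all terminals with `6` edges on which every valid labeling requires at least `8`
label assignments, while some valid labeling with `7` edges and `7` label assignments
achieves strictly smaller cost at `α = 0.6`. -/
theorem mkl_not_steiner_tree_over_union :
    ∃ (n : ℕ) (E : Finset (Fin n × Fin n)) (a : Fin n) (T : Fin 2 → Finset (Fin n)),
      (∀ i, a ∉ T i) ∧
      (∃ f : Fin n × Fin n → Finset (Fin 2), ValidLabeling E a T f) ∧
      (∀ f : Fin n × Fin n → Finset (Fin 2), ValidLabeling E a T f →
        (∀ g : Fin n × Fin n → Finset (Fin 2), ValidLabeling E a T g →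
          labelingCost (6/10) E f ≤ labelingCost (6/10) E g) →
        ¬ ((∀ t ∈ T 0 ∪ T 1,
              ReachIn (↑(E.filter (fun e => f e ≠ ∅)) : Set (Fin n × Fin n)) a t) ∧
           (∀ F' : Finset (Fin n × Fin n), F' ⊆ E →
              (∀ t ∈ T 0 ∪ T 1, ReachIn (↑F' : Set (Fin n × Fin n)) a t) →
              (E.filter (fun e => f e ≠ ∅)).card ≤ F'.card))) ∧
      (∃ F : Finset (Fin n × Fin n), F ⊆ E ∧
        (∀ t ∈ T 0 ∪ T 1, ReachIn (↑F : Set (Fin n × Fin n)) a t) ∧ F.card = 6 ∧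
        (∀ f : Fin n × Fin n → Finset (Fin 2), ValidLabeling E a T f →
          E.filter (fun e => f e ≠ ∅) ⊆ F → 8 ≤ labelCount E f) ∧
        (∃ g : Fin n × Fin n → Finset (Fin 2), ValidLabeling E a T g ∧
          edgeCount E g = 7 ∧ labelCount E g = 7 ∧
          ∀ f : Fin n × Fin n → Finset (Fin 2), ValidLabeling E a T f →
            E.filter (fun e => f e ≠ ∅) ⊆ F →
            labelingCost (6/10) E g < labelingCost (6/10) E f)) := by
  refine ⟨12, MKL.E0, 0, MKL.T0, ?_, ⟨MKL.g0, MKL.g0_valid⟩, ?_, ?_⟩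
  · intro i; fin_cases i <;> decide
  · -- main clause: a min-cost labeling's support is not a minimum Steiner tree
    rintro f hf hmin ⟨-, hmincard⟩
    have hcard6 : (MKL.E0.filter fun e => f e ≠ ∅).card ≤ 6 := by
      have h := hmincard MKL.F0 (by decide) MKL.F0_conn
      rwa [show MKL.F0.card = 6 from by decide] at h
    have memsup : ∀ (i : Fin 2) (e : Fin 12 × Fin 12), e ∈ EdgesWith MKL.E0 f i →
        e ∈ MKL.E0.filter fun e => f e ≠ ∅ := fun i e he =>
      Finset.mem_filter.2 ⟨he.1, Finset.ne_empty_of_mem he.2⟩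
    have hsubE : ∀ i : Fin 2, EdgesWith MKL.E0 f i ⊆ ↑MKL.E0 :=
      fun i e he => Finset.mem_coe.2 he.1
    have h0 := MKL.reach_t1 (hsubE 0) (hf 0 5 (by decide))
    have h1 := MKL.reach_t2 (hsubE 1) (hf 1 6 (by decide))
    rcases h0 with hA | hB <;> rcases h1 with hC | hD
    · -- both shared: cost at least 8.4 > 7
      have hL := MKL.ten_le_labelCount hA hC
      have hN : 6 ≤ edgeCount MKL.E0 f := by
        have hF : MKL.F0 ⊆ MKL.E0.filter fun e => f e ≠ ∅ := by
          intro x hx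
          simp only [MKL.F0, Finset.mem_insert, Finset.mem_singleton] at hx
          rcases hx with rfl|rfl|rfl|rfl|rfl|rfl
          · exact memsup 0 _ hA.1
          · exact memsup 0 _ hA.2.1
          · exact memsup 0 _ hA.2.2.1
          · exact memsup 0 _ hA.2.2.2.1
          · exact memsup 0 _ hA.2.2.2.2
          · exact memsup 1 _ hC.2.2.2.2
        have := Finset.card_le_card hF
        rwa [show MKL.F0.card = 6 from by decide] at this
      have hg := hmin MKL.g0 MKL.g0_valid
      simp only [labelingCost,
        show labelCount MKL.E0 MKL.g0 = 7 from by decide,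
        show edgeCount MKL.E0 MKL.g0 = 7 from by decide] at hg
      have c1 : (10:ℝ) ≤ (labelCount MKL.E0 f : ℝ) := by exact_mod_cast hL
      have c2 : (6:ℝ) ≤ (edgeCount MKL.E0 f : ℝ) := by exact_mod_cast hN
      norm_num at hg
      linarith
    · -- shared t1, direct t2: support has ≥ 9 edges
      have hX : ({(0,1),(1,2),(2,3),(3,4),(4,5),(0,9),(9,10),(10,11),(11,6)} :
          Finset (Fin 12 × Fin 12)) ⊆ MKL.E0.filter fun e => f e ≠ ∅ := by
        intro x hx
        simp only [Finset.mem_insert, Finset.mem_singleton] at hx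
        rcases hx with rfl|rfl|rfl|rfl|rfl|rfl|rfl|rfl|rfl
        · exact memsup 0 _ hA.1
        · exact memsup 0 _ hA.2.1
        · exact memsup 0 _ hA.2.2.1
        · exact memsup 0 _ hA.2.2.2.1
        · exact memsup 0 _ hA.2.2.2.2
        · exact memsup 1 _ hD.1
        · exact memsup 1 _ hD.2.1
        · exact memsup 1 _ hD.2.2.1
        · exact memsup 1 _ hD.2.2.2
      have hc := Finset.card_le_card hX
      rw [show ({(0,1),(1,2),(2,3),(3,4),(4,5),(0,9),(9,10),(10,11),(11,6)} :
          Finset (Fin 12 × Fin 12)).card = 9 from by decide] at hc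
      omega
    · -- direct t1, shared t2: support has ≥ 8 edges
      have hX : ({(0,7),(7,8),(8,5),(0,1),(1,2),(2,3),(3,4),(4,6)} :
          Finset (Fin 12 × Fin 12)) ⊆ MKL.E0.filter fun e => f e ≠ ∅ := by
        intro x hx
        simp only [Finset.mem_insert, Finset.mem_singleton] at hx
        rcases hx with rfl|rfl|rfl|rfl|rfl|rfl|rfl|rfl
        · exact memsup 0 _ hB.1
        · exact memsup 0 _ hB.2.1
        · exact memsup 0 _ hB.2.2
        · exact memsup 1 _ hC.1
        · exact memsup 1 _ hC.2.1
        · exact memsup 1 _ hC.2.2.1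
        · exact memsup 1 _ hC.2.2.2.1
        · exact memsup 1 _ hC.2.2.2.2
      have hc := Finset.card_le_card hX
      rw [show ({(0,7),(7,8),(8,5),(0,1),(1,2),(2,3),(3,4),(4,6)} :
          Finset (Fin 12 × Fin 12)).card = 8 from by decide] at hc
      omega
    · -- both direct: support has ≥ 7 edges
      have hX : ({(0,7),(7,8),(8,5),(0,9),(9,10),(10,11),(11,6)} :
          Finset (Fin 12 × Fin 12)) ⊆ MKL.E0.filter fun e => f e ≠ ∅ := by
        intro x hx
        simp only [Finset.mem_insert, Finset.mem_singleton] at hx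
        rcases hx with rfl|rfl|rfl|rfl|rfl|rfl|rfl
        · exact memsup 0 _ hB.1
        · exact memsup 0 _ hB.2.1
        · exact memsup 0 _ hB.2.2
        · exact memsup 1 _ hD.1
        · exact memsup 1 _ hD.2.1
        · exact memsup 1 _ hD.2.2.1
        · exact memsup 1 _ hD.2.2.2
      have hc := Finset.card_le_card hX
      rw [show ({(0,7),(7,8),(8,5),(0,9),(9,10),(10,11),(11,6)} :
          Finset (Fin 12 × Fin 12)).card = 7 from by decide] at hc
      omega
  · refine ⟨MKL.F0, by decide, MKL.F0_conn, by decide, ?_,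
      MKL.g0, MKL.g0_valid, by decide, by decide, ?_⟩
    · intro f hf hsub
      have := (MKL.key hf hsub).1
      omega
    · intro f hf hsub
      obtain ⟨hL, hN⟩ := MKL.key hf hsub
      simp only [labelingCost,
        show labelCount MKL.E0 MKL.g0 = 7 from by decide,
        show edgeCount MKL.E0 MKL.g0 = 7 from by decide]
      have c1 : (10:ℝ) ≤ (labelCount MKL.E0 f : ℝ) := by exact_mod_cast hL
      have c2 : (6:ℝ) ≤ (edgeCount MKL.E0 f : ℝ) := by exact_mod_cast hN
      norm_num
      linarith
end
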